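/- arXiv:2310.08865 — 2 statements merged into one kernel-verified Lean document; each statement's English description precedes it below -/
import Mathlib

section
/- Let p > 1, c_p = (2(p+1))^{1/(p-1)}, and Q(x) = c_p [2 cosh((p-1)x/2)]^{-2/(p-1)}. Then ∫_{-∞}^{∞} Q(x)^p e^{-x} dx = 2 c_p. -/
open MeasureTheory

/-- The soliton interaction constant `c_p = (2(p+1))^{1/(p-1)}`. -/
noncomputable def cp (p : ℝ) : ℝ := (2 * (p + 1)) ^ ((1 : ℝ) / (p - 1))

/-- The explicit soliton profile `Q(x) = c_p (2 cosh((p-1)x/2))^{-2/(p-1)}`. -/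
noncomputable def Q (p : ℝ) (x : ℝ) : ℝ :=
  cp p * (2 * Real.cosh ((p - 1) * x / 2)) ^ (-(2 / (p - 1)))

namespace SolitonAux

open Real Filter Set

/-- `v p x = e^{-(p-1)x}`. -/
noncomputable def v (p x : ℝ) : ℝ := Real.exp (-((p - 1) * x))

noncomputable def s (p : ℝ) : ℝ := (p + 1) / (p - 1)

noncomputable def K (p : ℝ) : ℝ := cp p ^ p / (p + 1)

noncomputable def G (p x : ℝ) : ℝ := -(K p * (v p x / (1 + v p x)) ^ s p)

lemma vpos (p x : ℝ) : 0 < v p x := Real.exp_pos _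

lemma one_add_v_pos (p x : ℝ) : 0 < 1 + v p x := by linarith [vpos p x]

lemma cp_pos {p : ℝ} (hp : 1 < p) : 0 < cp p :=
  Real.rpow_pos_of_pos (by linarith) _

lemma s_pos {p : ℝ} (hp : 1 < p) : 0 < s p :=
  div_pos (by linarith) (by linarith)

lemma f_eq {p : ℝ} (hp : 1 < p) (x : ℝ) :
    Q p x ^ p * Real.exp (-x) = cp p ^ p * v p x ^ s p / (1 + v p x) ^ (s p + 1) := by
  have hb : (0:ℝ) < p - 1 := by linarith
  have hcp := cp_pos hp
  have hCpos : (0:ℝ) < 2 * Real.cosh ((p - 1) * x / 2) := by positivity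
  have hC : (2:ℝ) * Real.cosh ((p - 1) * x / 2)
      = Real.exp ((p - 1) * x / 2) * (1 + v p x) := by
    rw [Real.cosh_eq, v, mul_add, mul_one, ← Real.exp_add]
    have : (p - 1) * x / 2 + -((p - 1) * x) = -((p - 1) * x / 2) := by ring
    rw [this]
    ring
  have hexp : ∀ a b : ℝ, Real.exp a ^ b = Real.exp (a * b) := by
    intro a b; rw [← Real.exp_mul]
  have ht : -(2 / (p - 1)) * p = -(s p + 1) := by
    rw [s]; field_simp; ring
  rw [Q, Real.mul_rpow hcp.le (Real.rpow_nonneg hCpos.le _),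
    ← Real.rpow_mul hCpos.le, ht, hC,
    Real.mul_rpow (Real.exp_pos _).le (one_add_v_pos p x).le, hexp,
    Real.rpow_neg (one_add_v_pos p x).le, v, hexp]
  rw [div_eq_mul_inv]
  have key : Real.exp ((p - 1) * x / 2 * -(s p + 1)) * Real.exp (-x)
      = Real.exp (-((p - 1) * x) * s p) := by
    rw [← Real.exp_add]
    congr 1
    rw [s]; field_simp; ring
  rw [← key]
  ring

lemma hasDerivAt_G {p : ℝ} (hp : 1 < p) (x : ℝ) :
    HasDerivAt (G p) (cp p ^ p * v p x ^ s p / (1 + v p x) ^ (s p + 1)) x := by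
  have hb : (0:ℝ) < p - 1 := by linarith
  have hvx := vpos p x
  have hdx := one_add_v_pos p x
  have hv : HasDerivAt (v p) ((1 - p) * v p x) x := by
    have h1 : HasDerivAt (fun y : ℝ => -((p - 1) * y)) (-(p - 1)) x := by
      simpa using ((hasDerivAt_id x).const_mul (p - 1)).fun_neg
    rw [neg_sub] at h1
    have h2 := h1.exp
    have h3 : HasDerivAt (fun y : ℝ => Real.exp (-((p - 1) * y)))
        ((1 - p) * Real.exp (-((p - 1) * x))) x := by
      convert h2 using 1; ring
    exact h3
  have hden : HasDerivAt (fun y => 1 + v p y) ((1 - p) * v p x) x := by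
    exact hv.const_add 1
  have hw : HasDerivAt (fun y => v p y / (1 + v p y))
      (((1 - p) * v p x * (1 + v p x) - v p x * ((1 - p) * v p x)) / (1 + v p x) ^ 2) x :=
    hv.div hden hdx.ne'
  have hwpos : 0 < v p x / (1 + v p x) := div_pos hvx hdx
  have hws := hw.rpow_const (p := s p) (Or.inl hwpos.ne')
  have hG := (hws.const_mul (K p)).fun_neg
  refine hG.congr_deriv (Eq.symm ?_)
  have hdiv : (v p x / (1 + v p x)) ^ (s p - 1)
      = v p x ^ (s p - 1) / (1 + v p x) ^ (s p - 1) :=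
    Real.div_rpow hvx.le hdx.le _
  have hvs : v p x ^ s p = v p x ^ (s p - 1) * v p x := by
    rw [← Real.rpow_add_one hvx.ne', sub_add_cancel]
  have hds : (1 + v p x) ^ (s p + 1) = (1 + v p x) ^ (s p - 1) * (1 + v p x) ^ 2 := by
    rw [← Real.rpow_two, ← Real.rpow_add hdx]
    congr 1
    ring
  have hK : cp p ^ p = K p * s p * (p - 1) := by
    rw [K, s]
    have h1 : p + 1 ≠ 0 := by linarith
    have h2 : p - 1 ≠ 0 := by linarith
    field_simp
  have hne1 : (1 + v p x) ^ (s p - 1) ≠ 0 := by positivity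
  have hne2 : v p x ^ (s p - 1) ≠ 0 := by positivity
  rw [hvs, hds, hK, hdiv]
  field_simp
  ring

lemma G_tendsto_top {p : ℝ} (hp : 1 < p) : Tendsto (G p) atTop (nhds 0) := by
  have hb : (0:ℝ) < p - 1 := by linarith
  have h1 : Tendsto (fun x : ℝ => (p - 1) * x) atTop atTop :=
    Tendsto.const_mul_atTop hb tendsto_id
  have h2 : Tendsto (fun x : ℝ => -((p - 1) * x)) atTop atBot :=
    tendsto_neg_atTop_atBot.comp h1
  have hv : Tendsto (fun x => v p x) atTop (nhds 0) := Real.tendsto_exp_atBot.comp h2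
  have hw : Tendsto (fun x => v p x / (1 + v p x)) atTop (nhds 0) := by
    have hden : Tendsto (fun x => 1 + v p x) atTop (nhds (1 + 0)) :=
      tendsto_const_nhds.add hv
    have := hv.div hden (by norm_num)
    rw [add_zero, div_one] at this
    exact this
  have hws : Tendsto (fun x => (v p x / (1 + v p x)) ^ s p) atTop (nhds 0) := by
    have := hw.rpow_const (Or.inr (s_pos hp).le)
    simpa [Real.zero_rpow (s_pos hp).ne'] using this
  have := (hws.const_mul (K p)).neg
  show Tendsto (fun x => -(K p * (v p x / (1 + v p x)) ^ s p)) atTop (nhds 0)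
  simpa using this

lemma G_tendsto_bot {p : ℝ} (hp : 1 < p) : Tendsto (G p) atBot (nhds (-K p)) := by
  have hb : (0:ℝ) < p - 1 := by linarith
  have h1 : Tendsto (fun x : ℝ => (p - 1) * x) atBot atBot := by
    exact Tendsto.const_mul_atBot hb tendsto_id
  have h2 : Tendsto (fun x : ℝ => -((p - 1) * x)) atBot atTop :=
    tendsto_neg_atBot_atTop.comp h1
  have hv : Tendsto (fun x => v p x) atBot atTop := Real.tendsto_exp_atTop.comp h2
  have hw : Tendsto (fun x => v p x / (1 + v p x)) atBot (nhds 1) := by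
    have hrw : ∀ x, v p x / (1 + v p x) = 1 - 1 / (1 + v p x) := by
      intro x
      have := (one_add_v_pos p x).ne'
      field_simp
      ring
    have hinv : Tendsto (fun x => 1 / (1 + v p x)) atBot (nhds 0) := by
      simp only [one_div]
      exact tendsto_inv_atTop_zero.comp (tendsto_atTop_add_const_left _ 1 hv)
    have := (tendsto_const_nhds (x := (1:ℝ))).sub hinv
    simp only [sub_zero] at this
    exact Tendsto.congr (fun x => (hrw x).symm) this
  have hws : Tendsto (fun x => (v p x / (1 + v p x)) ^ s p) atBot (nhds 1) := by
    have := hw.rpow_const (p := s p) (Or.inl one_ne_zero)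
    simpa [Real.one_rpow] using this
  have := (hws.const_mul (K p)).neg
  show Tendsto (fun x => -(K p * (v p x / (1 + v p x)) ^ s p)) atBot (nhds (-K p))
  simpa using this

end SolitonAux

open SolitonAux Real Filter Set in
/-- The soliton-interaction integral: `∫ Q^p(x) e^{-x} dx = 2 c_p`. -/
theorem soliton_interaction_integral (p : ℝ) (hp : 1 < p) :
    (∫ x : ℝ, Q p x ^ p * Real.exp (-x)) = 2 * cp p := by
  have hb : (0:ℝ) < p - 1 := by linarith
  set f : ℝ → ℝ := fun x => Q p x ^ p * Real.exp (-x) with hf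
  have hderiv : ∀ x, HasDerivAt (G p) (f x) x := by
    intro x
    rw [hf]
    simp only
    rw [f_eq hp x]
    exact hasDerivAt_G hp x
  have hQpos : ∀ x, 0 < Q p x := fun x =>
    mul_pos (cp_pos hp) (Real.rpow_pos_of_pos (by positivity) _)
  have hnonneg : ∀ x, 0 ≤ f x := fun x =>
    mul_nonneg (Real.rpow_nonneg (hQpos x).le _) (Real.exp_pos _).le
  -- integrability on Ioi 0
  have hIoi : IntegrableOn f (Ioi 0) :=
    integrableOn_Ioi_deriv_of_nonneg' (fun x _ => hderiv x) (fun x _ => hnonneg x)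
      (G_tendsto_top hp)
  -- integrability on Iic 0 via reflection
  have hderiv2 : ∀ x : ℝ, HasDerivAt (fun y => -(G p (-y))) (f (-x)) x := by
    intro x
    have h := (hderiv (-x)).comp x (hasDerivAt_neg x)
    simpa using h.fun_neg
  have htend2 : Tendsto (fun y : ℝ => -(G p (-y))) atTop (nhds (K p)) := by
    have := ((G_tendsto_bot hp).comp tendsto_neg_atTop_atBot).neg
    simpa using this
  have hIoi2 : IntegrableOn (fun x => f (-x)) (Ioi 0) :=
    integrableOn_Ioi_deriv_of_nonneg' (fun x _ => hderiv2 x) (fun x _ => hnonneg (-x)) htend2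
  have hIic : IntegrableOn f (Iic 0) := by
    have A : MeasurableEmbedding fun x : ℝ => -x :=
      (Homeomorph.neg ℝ).isClosedEmbedding.measurableEmbedding
    have h := A.integrableOn_map_iff (f := f) (s := Iic (0:ℝ)) (μ := volume)
    rw [Measure.map_neg_eq_self] at h
    rw [h]
    have hpre : (fun x : ℝ => -x) ⁻¹' Iic 0 = Ici 0 := by
      ext y; simp
    rw [hpre, integrableOn_Ici_iff_integrableOn_Ioi]
    exact hIoi2
  have hInt : Integrable f := by
    rw [← integrableOn_univ, ← Set.Iic_union_Ioi (a := (0:ℝ))]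
    exact hIic.union hIoi
  have hval := integral_of_hasDerivAt_of_tendsto hderiv hInt (G_tendsto_bot hp)
    (G_tendsto_top hp)
  rw [hf] at hval
  rw [hval]
  -- now show 0 - (-K p) = 2 * cp p
  have hcpp : cp p ^ p = 2 * (p + 1) * cp p := by
    have h1 : cp p ^ (p - 1) = 2 * (p + 1) := by
      rw [cp, ← Real.rpow_mul (by positivity), one_div_mul_cancel (by linarith : p - 1 ≠ 0),
        Real.rpow_one]
    have h2 : cp p ^ p = cp p ^ (p - 1) * cp p := by
      rw [← Real.rpow_add_one (cp_pos hp).ne', sub_add_cancel]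
    rw [h2, h1]
  rw [zero_sub, neg_neg, K, hcpp]
  field_simp
end

section
/- Let p > 2, c_p = (2(p+1))^{1/(p-1)}, and Q(x) = c_p (2cosh((p-1)x/2))^{-2/(p-1)}. Then there is C > 0 such that for all z ≥ 1, |∫_{-z/2}^{∞} (d/dy)(Q^p(y)) Q(y+z) dy - 2 c_p² e^{-z}| ≤ C(e^{-(p+1)z/2} + z e^{-pz} + e^{-2z}). -/
set_option maxHeartbeats 1000000
set_option linter.unusedSectionVars false

open MeasureTheory Real Set Filter


open MeasureTheory

/-- the explicit derivative of `Q^p` -/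
noncomputable def gg (p : ℝ) (y : ℝ) : ℝ :=
  -(2*p) * Real.sinh ((p-1)*y/2) * (2*Real.cosh ((p-1)*y/2))⁻¹ * (Q p y ^ p)

/-- explicit antiderivative of `Q^p e^{-y}` -/
noncomputable def HH (p : ℝ) (y : ℝ) : ℝ :=
  -(2 * cp p) * (1 + Real.exp ((p-1)*y)) ^ (-((p+1)/(p-1)))

lemma rpow_one_sub_abs {b t : ℝ} (hb : 0 ≤ b) (ht : 0 ≤ t) :
    |(1+t) ^ (-b) - 1| ≤ b * t := by
  have h1t : (0:ℝ) < 1 + t := by linarith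
  have h1 : (1+t) ^ (-b) ≤ 1 :=
    Real.rpow_le_one_of_one_le_of_nonpos (by linarith) (neg_nonpos.mpr hb)
  have hlog0 : 0 ≤ Real.log (1+t) := Real.log_nonneg (by linarith)
  have hlogt : Real.log (1+t) ≤ t := by
    have := Real.log_le_sub_one_of_pos h1t; linarith
  have h2 : 1 - b * t ≤ (1+t) ^ (-b) := by
    rw [Real.rpow_def_of_pos h1t]
    have := Real.add_one_le_exp (Real.log (1+t) * (-b))
    nlinarith [mul_le_mul_of_nonneg_left hlogt hb]
  rw [abs_of_nonpos (by linarith)]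
  linarith

section
variable {p : ℝ} (hp : 2 < p)
include hp

lemma cp_pos : 0 < cp p := Real.rpow_pos_of_pos (by linarith) _

lemma cp_pow : cp p ^ (p - 1) = 2 * (p + 1) := by
  rw [cp, ← Real.rpow_mul (by linarith), one_div_mul_cancel (by linarith : p - 1 ≠ 0),
    Real.rpow_one]

lemma cp_pow_p : cp p ^ p = 2 * (p + 1) * cp p := by
  have h := cp_pos hp
  calc cp p ^ p = cp p ^ ((p - 1) + 1) := by ring_nf
    _ = cp p ^ (p-1) * cp p ^ (1:ℝ) := Real.rpow_add h _ _
    _ = 2 * (p + 1) * cp p := by rw [cp_pow hp, Real.rpow_one]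

lemma two_cosh_pos (t : ℝ) : 0 < 2 * Real.cosh t := by positivity

lemma exp_abs_le_two_cosh (t : ℝ) : Real.exp |t| ≤ 2 * Real.cosh t := by
  rw [Real.cosh_eq]
  rcases abs_cases t with ⟨h, _⟩ | ⟨h, _⟩ <;> rw [h] <;>
    [nlinarith [Real.exp_pos (-t)]; nlinarith [Real.exp_pos t]]

lemma Q_pos (y : ℝ) : 0 < Q p y :=
  mul_pos (cp_pos hp) (Real.rpow_pos_of_pos (two_cosh_pos hp _) _)

lemma Q_le (y : ℝ) : Q p y ≤ cp p * Real.exp (-|y|) := by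
  have hb : (0:ℝ) < p - 1 := by linarith
  have h1 : Real.exp (((p-1)/2) * |y|) ≤ 2 * Real.cosh ((p-1)*y/2) := by
    have := exp_abs_le_two_cosh hp ((p-1)*y/2)
    rwa [show |(p-1)*y/2| = ((p-1)/2) * |y| by
      rw [abs_div, abs_mul, abs_of_pos hb]; norm_num; ring] at this
  have h2 : (2 * Real.cosh ((p-1)*y/2)) ^ (-(2/(p-1))) ≤
      (Real.exp (((p-1)/2) * |y|)) ^ (-(2/(p-1))) :=
    Real.rpow_le_rpow_of_nonpos (Real.exp_pos _) h1 (neg_nonpos.mpr (by positivity))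
  have h3 : (Real.exp (((p-1)/2) * |y|)) ^ (-(2/(p-1))) = Real.exp (-|y|) := by
    rw [← Real.exp_mul]; congr 1; field_simp
  calc Q p y ≤ cp p * (Real.exp (((p-1)/2) * |y|)) ^ (-(2/(p-1))) :=
        mul_le_mul_of_nonneg_left h2 (cp_pos hp).le
    _ = cp p * Real.exp (-|y|) := by rw [h3]

lemma fpow_eq (y : ℝ) :
    Q p y ^ p = cp p ^ p * (2 * Real.cosh ((p-1)*y/2)) ^ (-(2*p/(p-1))) := by
  rw [Q, Real.mul_rpow (cp_pos hp).le (Real.rpow_pos_of_pos (two_cosh_pos hp _) _).le,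
    ← Real.rpow_mul (two_cosh_pos hp _).le]
  congr 1
  ring

lemma fpow_pos (y : ℝ) : 0 < Q p y ^ p := Real.rpow_pos_of_pos (Q_pos hp y) _

lemma fpow_le (y : ℝ) : Q p y ^ p ≤ cp p ^ p * Real.exp (-p * |y|) := by
  have h0 : (0:ℝ) < p := by linarith
  calc Q p y ^ p ≤ (cp p * Real.exp (-|y|)) ^ p :=
        Real.rpow_le_rpow (Q_pos hp y).le (Q_le hp y) h0.le
    _ = cp p ^ p * Real.exp (-p * |y|) := by
        rw [Real.mul_rpow (cp_pos hp).le (Real.exp_pos _).le, ← Real.exp_mul]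
        ring_nf

lemma hasDerivAt_fpow (y : ℝ) : HasDerivAt (fun y => Q p y ^ p) (gg p y) y := by
  have hb : (0:ℝ) < p - 1 := by linarith
  have hu : ∀ x, (0:ℝ) < 2 * Real.cosh ((p-1)*x/2) := fun x => two_cosh_pos hp _
  have hi : HasDerivAt (fun x : ℝ => (p-1)*x/2) ((p-1)/2) y := by
    simpa using ((hasDerivAt_id y).const_mul (p-1)).div_const 2
  have hc : HasDerivAt (fun x : ℝ => 2 * Real.cosh ((p-1)*x/2))
      (2 * (Real.sinh ((p-1)*y/2) * ((p-1)/2))) y := (hi.cosh).const_mul 2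
  have hr := (hc.rpow_const (p := -(2*p/(p-1))) (Or.inl (hu y).ne')).const_mul (cp p ^ p)
  have heq : (fun x => Q p x ^ p) =
      fun x => cp p ^ p * (2 * Real.cosh ((p-1)*x/2)) ^ (-(2*p/(p-1))) :=
    funext fun x => fpow_eq hp x
  rw [heq]
  refine hr.congr_deriv (Eq.symm ?_)
  rw [gg, fpow_eq hp, Real.rpow_sub (hu y), Real.rpow_one]
  field_simp

lemma abs_gg_le (y : ℝ) : |gg p y| ≤ p * (Q p y ^ p) := by
  set t := (p-1)*y/2 with ht
  have hu := two_cosh_pos hp t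
  have hf := fpow_pos hp y
  have hsc : |Real.sinh t| ≤ Real.cosh t := by
    rw [abs_le]
    refine ⟨?_, (Real.sinh_lt_cosh t).le⟩
    rw [Real.sinh_eq, Real.cosh_eq]
    nlinarith [Real.exp_pos t]
  have h1 : |gg p y| = (2*p) * |Real.sinh t| * (2*Real.cosh t)⁻¹ * (Q p y ^ p) := by
    rw [gg, abs_mul, abs_mul, abs_mul, abs_neg,
      abs_of_pos (by positivity : (0:ℝ) < 2*p), abs_of_pos (inv_pos.mpr hu),
      abs_of_pos hf]
  rw [h1]
  calc (2*p) * |Real.sinh t| * (2*Real.cosh t)⁻¹ * (Q p y ^ p)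
      ≤ (2*p) * Real.cosh t * (2*Real.cosh t)⁻¹ * (Q p y ^ p) := by
        have : (0:ℝ) < 2*p := by linarith
        gcongr
    _ = p * (Q p y ^ p) := by
        rw [show (2*p) * Real.cosh t * (2*Real.cosh t)⁻¹ * (Q p y ^ p)
            = p * (Q p y ^ p) * ((2*Real.cosh t) * (2*Real.cosh t)⁻¹) from by ring,
          mul_inv_cancel₀ hu.ne', mul_one]

lemma abs_gg_le' (y : ℝ) : |gg p y| ≤ p * cp p ^ p * Real.exp (-p * |y|) := by
  calc |gg p y| ≤ p * (Q p y ^ p) := abs_gg_le hp y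
    _ ≤ p * (cp p ^ p * Real.exp (-p * |y|)) :=
        mul_le_mul_of_nonneg_left (fpow_le hp y) (by linarith)
    _ = p * cp p ^ p * Real.exp (-p * |y|) := by ring

lemma two_cosh_factor_pos (y : ℝ) :
    2 * Real.cosh ((p-1)*y/2) = Real.exp ((p-1)*y/2) * (1 + Real.exp (-((p-1)*y))) := by
  rw [Real.cosh_eq, mul_add, mul_one, ← Real.exp_add]
  ring_nf

lemma two_cosh_factor_neg (y : ℝ) :
    2 * Real.cosh ((p-1)*y/2) = Real.exp (-((p-1)*y/2)) * (1 + Real.exp ((p-1)*y)) := by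
  rw [Real.cosh_eq, mul_add, mul_one, ← Real.exp_add]
  ring_nf

/-- `Q x = cp e^{-x} (1+e^{-(p-1)x})^{-2/(p-1)}` -/
lemma Q_factor (y : ℝ) :
    Q p y = cp p * Real.exp (-y) * (1 + Real.exp (-((p-1)*y))) ^ (-(2/(p-1))) := by
  have hb : (0:ℝ) < p - 1 := by linarith
  rw [Q, two_cosh_factor_pos hp,
    Real.mul_rpow (Real.exp_pos _).le (by positivity), ← Real.exp_mul]
  rw [show (p-1)*y/2 * (-(2/(p-1))) = -y from by field_simp]
  ring

/-- `Q^p e^{-y} = cp^p e^{(p-1)y} (1+e^{(p-1)y})^{-2p/(p-1)}` -/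
lemma fpow_exp_eq (y : ℝ) :
    Q p y ^ p * Real.exp (-y)
      = cp p ^ p * (Real.exp ((p-1)*y) * (1 + Real.exp ((p-1)*y)) ^ (-(2*p/(p-1)))) := by
  have hb : (0:ℝ) < p - 1 := by linarith
  rw [fpow_eq hp, two_cosh_factor_neg hp,
    Real.mul_rpow (Real.exp_pos _).le (by positivity), ← Real.exp_mul]
  rw [show -((p-1)*y/2) * (-(2*p/(p-1))) = p*y from by field_simp]
  have h2 : Real.exp (p*y) * Real.exp (-y) = Real.exp ((p-1)*y) := by
    rw [← Real.exp_add]; ring_nf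
  rw [← h2]; ring

/-- tail bound for `Q` -/
lemma Q_tail (x : ℝ) :
    |Q p x - cp p * Real.exp (-x)| ≤ cp p * (2/(p-1)) * Real.exp (-(p*x)) := by
  have hb : (0:ℝ) < p - 1 := by linarith
  set t := Real.exp (-((p-1)*x)) with htdef
  have ht : 0 ≤ t := (Real.exp_pos _).le
  have h1 : Q p x - cp p * Real.exp (-x)
      = cp p * Real.exp (-x) * ((1+t) ^ (-(2/(p-1))) - 1) := by
    rw [Q_factor hp]; ring
  rw [h1, abs_mul, abs_of_pos (mul_pos (cp_pos hp) (Real.exp_pos _))]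
  calc cp p * Real.exp (-x) * |(1+t) ^ (-(2/(p-1))) - 1|
      ≤ cp p * Real.exp (-x) * ((2/(p-1)) * t) :=
        mul_le_mul_of_nonneg_left
          (rpow_one_sub_abs (div_nonneg (by norm_num) hb.le) ht)
          (mul_pos (cp_pos hp) (Real.exp_pos _)).le
    _ = cp p * (2/(p-1)) * (Real.exp (-x) * Real.exp (-((p-1)*x))) := by
        rw [htdef]; ring
    _ = cp p * (2/(p-1)) * Real.exp (-(p*x)) := by
        rw [← Real.exp_add]; congr 1; ring

lemma W_pos (y : ℝ) : (0:ℝ) < 1 + Real.exp ((p-1)*y) := by positivity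

lemma hasDerivAt_HH (y : ℝ) :
    HasDerivAt (HH p) (Q p y ^ p * Real.exp (-y)) y := by
  have hb : (0:ℝ) < p - 1 := by linarith
  have hW : HasDerivAt (fun y : ℝ => 1 + Real.exp ((p-1)*y))
      (Real.exp ((p-1)*y) * (p-1)) y := by
    have h1 : HasDerivAt (fun y : ℝ => (p-1)*y) (p-1) y := by
      simpa using (hasDerivAt_id y).const_mul (p-1)
    simpa using (h1.exp).const_add 1
  have hr := (hW.rpow_const (p := -((p+1)/(p-1)))
    (Or.inl (W_pos hp y).ne')).const_mul (-(2 * cp p))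
  refine hr.congr_deriv (Eq.symm ?_)
  rw [fpow_exp_eq hp, cp_pow_p hp]
  rw [show -((p+1)/(p-1)) - 1 = -(2*p/(p-1)) from by field_simp; ring]
  field_simp

lemma tendsto_exp_neg_mul (c : ℝ) (hc : 0 < c) :
    Tendsto (fun y : ℝ => Real.exp (-(c*y))) atTop (nhds 0) :=
  Real.tendsto_exp_atBot.comp
    (tendsto_neg_atTop_atBot.comp (tendsto_id.const_mul_atTop hc))

lemma tendsto_G0 :
    Tendsto (fun y => Q p y ^ p * Real.exp (-y) + HH p y) atTop (nhds 0) := by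
  have hb : (0:ℝ) < p - 1 := by linarith
  have hcp := cp_pos hp
  have hlim := (tendsto_exp_neg_mul hp (p+1) (by linarith)).const_mul (cp p ^ p)
  rw [mul_zero] at hlim
  have h1 : Tendsto (fun y => Q p y ^ p * Real.exp (-y)) atTop (nhds 0) := by
    apply squeeze_zero' (Filter.Eventually.of_forall fun y =>
      (mul_pos (fpow_pos hp y) (Real.exp_pos _)).le)
      ?_ hlim
    filter_upwards [eventually_ge_atTop (0:ℝ)] with y hy
    calc Q p y ^ p * Real.exp (-y)
        ≤ cp p ^ p * Real.exp (-p * |y|) * Real.exp (-y) := by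
          gcongr; exact fpow_le hp y
      _ = cp p ^ p * Real.exp (-((p+1)*y)) := by
          rw [abs_of_nonneg hy, mul_assoc, ← Real.exp_add]; ring_nf
  have h2 : Tendsto (fun y => HH p y) atTop (nhds 0) := by
    have hlim2 := (tendsto_exp_neg_mul hp (p+1) (by linarith)).const_mul (2 * cp p)
    rw [mul_zero] at hlim2
    have h3 : Tendsto (fun y => (2 * cp p) * (1 + Real.exp ((p-1)*y)) ^ (-((p+1)/(p-1))))
        atTop (nhds 0) := by
      apply squeeze_zero' (Filter.Eventually.of_forall fun y =>
        mul_nonneg (by linarith) (Real.rpow_nonneg (W_pos hp y).le _)) ?_ hlim2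
      apply Filter.Eventually.of_forall
      intro y
      have hE : (0:ℝ) < Real.exp ((p-1)*y) := Real.exp_pos _
      have h4 : (1 + Real.exp ((p-1)*y)) ^ (-((p+1)/(p-1)))
          ≤ (Real.exp ((p-1)*y)) ^ (-((p+1)/(p-1))) :=
        Real.rpow_le_rpow_of_nonpos hE (by linarith)
          (neg_nonpos.mpr (div_nonneg (by linarith) hb.le))
      have h5 : (Real.exp ((p-1)*y)) ^ (-((p+1)/(p-1))) = Real.exp (-((p+1)*y)) := by
        rw [← Real.exp_mul]; congr 1; field_simp
      rw [← h5]
      exact mul_le_mul_of_nonneg_left h4 (by linarith)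
    have heq : (fun y => HH p y) = fun y =>
        -((2 * cp p) * (1 + Real.exp ((p-1)*y)) ^ (-((p+1)/(p-1)))) := by
      funext y; rw [HH]; ring
    rw [heq, ← neg_zero]
    exact h3.neg
  simpa using h1.add h2

lemma continuous_Q : Continuous (Q p) := by
  apply continuous_const.mul
  apply Continuous.rpow_const
  · exact continuous_const.mul (Real.continuous_cosh.comp (by continuity))
  · exact fun x => Or.inl (two_cosh_pos hp _).ne'

lemma continuous_fpow : Continuous (fun y => Q p y ^ p) :=
  (continuous_Q hp).rpow_const fun x => Or.inl (Q_pos hp x).ne'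

lemma continuous_gg : Continuous (gg p) := by
  apply Continuous.mul ?_ (continuous_fpow hp)
  apply Continuous.mul
  · exact continuous_const.mul (Real.continuous_sinh.comp (by continuity))
  · exact (continuous_const.mul (Real.continuous_cosh.comp (by continuity))).inv₀
      fun x => (two_cosh_pos hp _).ne'

lemma integrableOn_aux {F : ℝ → ℝ} (hF : Continuous F) {K : ℝ}
    (hK : ∀ y, |F y| ≤ K * Real.exp (-y)) (w : ℝ) :
    IntegrableOn (fun y => gg p y * F y) (Ioi w) := by
  have hb : (0:ℝ) < p - 1 := by linarith
  have hcp := cp_pos hp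
  have hK0 : 0 ≤ K := by
    have h := hK 0
    have h0 := abs_nonneg (F 0)
    simp only [neg_zero, Real.exp_zero, mul_one] at h
    linarith
  apply Integrable.mono'
    (g := fun y => (p * cp p ^ p * K) * Real.exp (-(p-1) * y))
  · exact (exp_neg_integrableOn_Ioi w hb).const_mul _
  · exact ((continuous_gg hp).mul hF).aestronglyMeasurable.restrict
  · apply ae_of_all
    intro y
    have hexp : Real.exp (-p * |y|) * Real.exp (-y) ≤ Real.exp (-(p-1) * y) := by
      rw [← Real.exp_add, Real.exp_le_exp]
      rcases abs_cases y with ⟨h, h'⟩ | ⟨h, h'⟩ <;> rw [h] <;> nlinarith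
    have hcpp : (0:ℝ) < cp p ^ p := Real.rpow_pos_of_pos hcp p
    calc ‖gg p y * F y‖ = |gg p y| * |F y| := abs_mul _ _
      _ ≤ (p * cp p ^ p * Real.exp (-p * |y|)) * (K * Real.exp (-y)) :=
          mul_le_mul (abs_gg_le' hp y) (hK y) (abs_nonneg _) (by positivity)
      _ = (p * cp p ^ p * K) * (Real.exp (-p * |y|) * Real.exp (-y)) := by ring
      _ ≤ (p * cp p ^ p * K) * Real.exp (-(p-1) * y) := by
          exact mul_le_mul_of_nonneg_left hexp (by positivity)

end

lemma main_diff {p : ℝ} (hp : 2 < p) (z : ℝ) (hz : 1 ≤ z) :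
    |cp p * Real.exp (-z) * (0 - (Q p (-z/2) ^ p * Real.exp (-(-z/2)) + HH p (-z/2)))
        - 2 * (cp p) ^ 2 * Real.exp (-z)|
      ≤ (2 * cp p ^ 2 * ((p+1)/(p-1)) + cp p ^ p * cp p)
          * Real.exp (-(p + 1) * z / 2) := by
  have hb : (0:ℝ) < p - 1 := by linarith
  have hcp := cp_pos hp
  have hcpp : (0:ℝ) < cp p ^ p := Real.rpow_pos_of_pos hcp p
  have hz0 : (0:ℝ) < z := by linarith
  set u : ℝ := Real.exp ((p-1)*(-z/2)) with hu
  have hu0 : 0 < u := Real.exp_pos _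
  have hHH : HH p (-z/2) = -(2 * cp p) * (1 + u) ^ (-((p+1)/(p-1))) := rfl
  have hkey : cp p * Real.exp (-z) * (0 - (Q p (-z/2) ^ p * Real.exp (-(-z/2)) + HH p (-z/2)))
      - 2 * (cp p) ^ 2 * Real.exp (-z)
      = cp p * Real.exp (-z) *
          (2 * cp p * ((1 + u) ^ (-((p+1)/(p-1))) - 1)
            - Q p (-z/2) ^ p * Real.exp (-(-z/2))) := by
    rw [hHH]; ring
  rw [hkey, abs_mul, abs_of_pos (by positivity : (0:ℝ) < cp p * Real.exp (-z))]
  have habs1 : |(1 + u) ^ (-((p+1)/(p-1))) - 1| ≤ ((p+1)/(p-1)) * u :=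
    rpow_one_sub_abs (div_nonneg (by linarith) hb.le) hu0.le
  have hfw : Q p (-z/2) ^ p * Real.exp (-(-z/2)) ≤ cp p ^ p * u := by
    have h1 : Q p (-z/2) ^ p ≤ cp p ^ p * Real.exp (-p * |(-z/2 : ℝ)|) := fpow_le hp _
    have h2 : |(-z/2 : ℝ)| = z/2 := by
      rw [abs_div, abs_neg, abs_of_pos hz0]; norm_num
    calc Q p (-z/2) ^ p * Real.exp (-(-z/2))
        ≤ cp p ^ p * Real.exp (-p * |(-z/2 : ℝ)|) * Real.exp (-(-z/2)) := by gcongr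
      _ = cp p ^ p * u := by
          rw [h2, hu, mul_assoc, ← Real.exp_add]
          congr 2
          ring
  have hfw0 : 0 ≤ Q p (-z/2) ^ p * Real.exp (-(-z/2)) :=
    (mul_pos (fpow_pos hp _) (Real.exp_pos _)).le
  have hstep : |2 * cp p * ((1 + u) ^ (-((p+1)/(p-1))) - 1)
        - Q p (-z/2) ^ p * Real.exp (-(-z/2))|
      ≤ (2 * cp p * ((p+1)/(p-1)) + cp p ^ p) * u := by
    calc |2 * cp p * ((1 + u) ^ (-((p+1)/(p-1))) - 1)
          - Q p (-z/2) ^ p * Real.exp (-(-z/2))|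
        ≤ |2 * cp p * ((1 + u) ^ (-((p+1)/(p-1))) - 1)|
            + |Q p (-z/2) ^ p * Real.exp (-(-z/2))| := abs_sub _ _
      _ ≤ 2 * cp p * (((p+1)/(p-1)) * u) + cp p ^ p * u := by
          apply add_le_add
          · rw [abs_mul, abs_of_pos (by positivity : (0:ℝ) < 2 * cp p)]
            exact mul_le_mul_of_nonneg_left habs1 (by positivity)
          · rw [abs_of_nonneg hfw0]; exact hfw
      _ = (2 * cp p * ((p+1)/(p-1)) + cp p ^ p) * u := by ring
  calc cp p * Real.exp (-z) *
        |2 * cp p * ((1 + u) ^ (-((p+1)/(p-1))) - 1)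
          - Q p (-z/2) ^ p * Real.exp (-(-z/2))|
      ≤ cp p * Real.exp (-z) * ((2 * cp p * ((p+1)/(p-1)) + cp p ^ p) * u) :=
        mul_le_mul_of_nonneg_left hstep (by positivity)
    _ = (2 * cp p ^ 2 * ((p+1)/(p-1)) + cp p ^ p * cp p) * (Real.exp (-z) * u) := by
        ring
    _ = (2 * cp p ^ 2 * ((p+1)/(p-1)) + cp p ^ p * cp p)
          * Real.exp (-(p + 1) * z / 2) := by
        rw [hu, ← Real.exp_add]
        congr 2
        field_simp
        ring

/-- Leading-order soliton-tail interaction integral: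
`|∫_{-z/2}^∞ (Q^p)'(y) Q(y+z) dy - 2c_p² e^{-z}| ≲ e^{-(p+1)z/2} + z e^{-pz} + e^{-2z}`. -/
theorem soliton_tail_interaction (p : ℝ) (hp : 2 < p) :
    ∃ C > 0, ∀ z : ℝ, 1 ≤ z →
      |(∫ y in Set.Ioi (-z / 2), deriv (fun y : ℝ => Q p y ^ p) y * Q p (y + z))
          - 2 * (cp p) ^ 2 * Real.exp (-z)| ≤
        C * (Real.exp (-(p + 1) * z / 2) + z * Real.exp (-p * z) + Real.exp (-2 * z)) := by
  have hb : (0:ℝ) < p - 1 := by linarith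
  have hcp := cp_pos hp
  have hcpp : (0:ℝ) < cp p ^ p := Real.rpow_pos_of_pos hcp p
  set C1 : ℝ := 2 * cp p ^ 2 * ((p+1)/(p-1)) + cp p ^ p * cp p with hC1
  set C2 : ℝ := (3/2) * (p * cp p ^ p * (cp p * (2/(p-1)))) with hC2
  have hC1p : 0 < C1 := by positivity
  have hC2p : 0 < C2 := by positivity
  refine ⟨C1 + C2 + 1, by positivity, fun z hz => ?_⟩
  have hz0 : (0:ℝ) < z := by linarith
  have hw0 : (-z/2 : ℝ) ≤ 0 := by linarith
  -- rewrite deriv as gg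
  have hdrw : ∀ y : ℝ, deriv (fun y : ℝ => Q p y ^ p) y = gg p y :=
    fun y => (hasDerivAt_fpow hp y).deriv
  simp only [hdrw]
  -- integrability
  have hQz : ∀ y : ℝ, |Q p (y+z)| ≤ (cp p * Real.exp (-z)) * Real.exp (-y) := by
    intro y
    rw [abs_of_pos (Q_pos hp _)]
    calc Q p (y+z) ≤ cp p * Real.exp (-|y+z|) := Q_le hp _
      _ ≤ cp p * Real.exp (-(y+z)) :=
          mul_le_mul_of_nonneg_left
            (Real.exp_le_exp.mpr (neg_le_neg (le_abs_self _))) hcp.le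
      _ = (cp p * Real.exp (-z)) * Real.exp (-y) := by
          rw [mul_assoc, ← Real.exp_add]; congr 2; ring
  have hEz : ∀ y : ℝ, cp p * Real.exp (-(y+z)) = (cp p * Real.exp (-z)) * Real.exp (-y) := by
    intro y; rw [mul_assoc, ← Real.exp_add]; congr 2; ring
  have hcont1 : Continuous (fun y : ℝ => Q p (y + z)) :=
    (continuous_Q hp).comp (continuous_id.add continuous_const)
  have hcont2 : Continuous (fun y : ℝ => cp p * Real.exp (-(y+z))) :=
    continuous_const.mul (Real.continuous_exp.comp (continuous_id.add continuous_const).neg)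
  have hcont3 : Continuous (fun y : ℝ => Real.exp (-y)) :=
    Real.continuous_exp.comp continuous_neg
  have hF1 : IntegrableOn (fun y => gg p y * Q p (y+z)) (Ioi (-z/2)) :=
    integrableOn_aux hp hcont1 hQz _
  have hF2 : IntegrableOn (fun y => gg p y * (cp p * Real.exp (-(y+z)))) (Ioi (-z/2)) := by
    apply integrableOn_aux hp hcont2 (K := cp p * Real.exp (-z))
    intro y
    rw [abs_of_pos (by positivity), hEz y]
  have hF3 : IntegrableOn (fun y => gg p y * Real.exp (-y)) (Ioi (-z/2)) := by
    apply integrableOn_aux hp hcont3 (K := 1)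
    intro y
    rw [abs_of_pos (Real.exp_pos _), one_mul]
  have hsub : IntegrableOn
      (fun y => gg p y * (Q p (y+z) - cp p * Real.exp (-(y+z)))) (Ioi (-z/2)) := by
    simp only [mul_sub]
    exact hF1.sub hF2
  -- split integral
  have hsplit : (∫ y in Ioi (-z/2), gg p y * Q p (y+z))
      = (∫ y in Ioi (-z/2), gg p y * (cp p * Real.exp (-(y+z))))
        + ∫ y in Ioi (-z/2), gg p y * (Q p (y+z) - cp p * Real.exp (-(y+z))) := by
    rw [← integral_add hF2 hsub]
    congr 1
    funext y
    ring
  -- FTC for the main term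
  have hG : ∀ x : ℝ, HasDerivAt (fun x => Q p x ^ p * Real.exp (-x) + HH p x)
      (gg p x * Real.exp (-x)) x := by
    intro x
    have he : HasDerivAt (fun x : ℝ => Real.exp (-x)) (-Real.exp (-x)) x := by
      simpa using ((hasDerivAt_id x).neg).exp
    have h2 := ((hasDerivAt_fpow hp x).mul he).add (hasDerivAt_HH hp x)
    refine h2.congr_deriv (Eq.symm ?_)
    ring
  have hGcont : Continuous (fun x => Q p x ^ p * Real.exp (-x) + HH p x) := by
    apply Continuous.add
    · exact (continuous_fpow hp).mul hcont3
    · exact continuous_const.mul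
        ((Continuous.rpow_const (continuous_const.add
          (Real.continuous_exp.comp (continuous_const.mul continuous_id)))
          (fun x => Or.inl (W_pos hp x).ne')))
  have hFTC : (∫ y in Ioi (-z/2), gg p y * Real.exp (-y))
      = 0 - (Q p (-z/2) ^ p * Real.exp (-(-z/2)) + HH p (-z/2)) :=
    integral_Ioi_of_hasDerivAt_of_tendsto hGcont.continuousWithinAt
      (fun x _ => hG x) hF3 (tendsto_G0 hp)
  have hmain : (∫ y in Ioi (-z/2), gg p y * (cp p * Real.exp (-(y+z))))
      = cp p * Real.exp (-z)
          * (0 - (Q p (-z/2) ^ p * Real.exp (-(-z/2)) + HH p (-z/2))) := by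
    calc (∫ y in Ioi (-z/2), gg p y * (cp p * Real.exp (-(y+z))))
        = ∫ y in Ioi (-z/2), (cp p * Real.exp (-z)) * (gg p y * Real.exp (-y)) := by
          congr 1; funext y; rw [hEz y]; ring
      _ = (cp p * Real.exp (-z)) * ∫ y in Ioi (-z/2), gg p y * Real.exp (-y) :=
          MeasureTheory.integral_const_mul _ _
      _ = cp p * Real.exp (-z)
            * (0 - (Q p (-z/2) ^ p * Real.exp (-(-z/2)) + HH p (-z/2))) := by
          rw [hFTC]
  -- error term bound
  set Cz : ℝ := p * cp p ^ p * (cp p * (2/(p-1))) * Real.exp (-(p*z)) with hCz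
  have hCzp : 0 < Cz := by positivity
  have hptwise : ∀ y : ℝ,
      |gg p y * (Q p (y+z) - cp p * Real.exp (-(y+z)))|
        ≤ Cz * Real.exp (-(p * |y|) + p * (-y)) := by
    intro y
    rw [abs_mul]
    calc |gg p y| * |Q p (y+z) - cp p * Real.exp (-(y+z))|
        ≤ (p * cp p ^ p * Real.exp (-p * |y|))
            * (cp p * (2/(p-1)) * Real.exp (-(p*(y+z)))) :=
          mul_le_mul (abs_gg_le' hp y) (Q_tail hp (y+z)) (abs_nonneg _) (by positivity)
      _ = Cz * Real.exp (-(p * |y|) + p * (-y)) := by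
          rw [hCz, show -p * |y| = -(p * |y|) from by ring,
            show -(p*(y+z)) = p * (-y) + -(p * z) from by ring,
            Real.exp_add, Real.exp_add]
          ring
  -- split error integral at 0
  have hE1 : IntegrableOn
      (fun y => gg p y * (Q p (y+z) - cp p * Real.exp (-(y+z)))) (Ioc (-z/2) 0) :=
    hsub.mono_set Ioc_subset_Ioi_self
  have hE2 : IntegrableOn
      (fun y => gg p y * (Q p (y+z) - cp p * Real.exp (-(y+z)))) (Ioi 0) :=
    hsub.mono_set (Ioi_subset_Ioi hw0)
  have hEsplit : (∫ y in Ioi (-z/2), gg p y * (Q p (y+z) - cp p * Real.exp (-(y+z))))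
      = (∫ y in Ioc (-z/2) 0, gg p y * (Q p (y+z) - cp p * Real.exp (-(y+z))))
        + ∫ y in Ioi 0, gg p y * (Q p (y+z) - cp p * Real.exp (-(y+z))) := by
    rw [← setIntegral_union (Ioc_disjoint_Ioi le_rfl) measurableSet_Ioi hE1 hE2,
      Ioc_union_Ioi_eq_Ioi hw0]
  have hB1 : ‖∫ y in Ioc (-z/2) 0, gg p y * (Q p (y+z) - cp p * Real.exp (-(y+z)))‖
      ≤ Cz * (z/2) := by
    have hvol : (volume (Ioc (-z/2 : ℝ) 0)).toReal = z/2 := by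
      rw [Real.volume_Ioc, ENNReal.toReal_ofReal (by linarith)]
      ring
    calc ‖∫ y in Ioc (-z/2) 0, gg p y * (Q p (y+z) - cp p * Real.exp (-(y+z)))‖
        ≤ Cz * (volume (Ioc (-z/2 : ℝ) 0)).toReal := by
          apply norm_setIntegral_le_of_norm_le_const
          · rw [Real.volume_Ioc]; exact ENNReal.ofReal_lt_top
          · intro y hy
            calc ‖gg p y * (Q p (y+z) - cp p * Real.exp (-(y+z)))‖
                ≤ Cz * Real.exp (-(p * |y|) + p * (-y)) := hptwise y
              _ ≤ Cz * 1 := by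
                  apply mul_le_mul_of_nonneg_left ?_ hCzp.le
                  rw [show (1:ℝ) = Real.exp 0 from (Real.exp_zero).symm,
                    Real.exp_le_exp]
                  nlinarith [abs_nonneg y, neg_abs_le y]
              _ = Cz := mul_one Cz
        _ = Cz * (z/2) := by rw [hvol]
  have hB2 : ‖∫ y in Ioi 0, gg p y * (Q p (y+z) - cp p * Real.exp (-(y+z)))‖
      ≤ Cz := by
    have hint : IntegrableOn (fun y => Cz * Real.exp (-y)) (Ioi 0) := by
      have := (exp_neg_integrableOn_Ioi (0:ℝ) (zero_lt_one)).const_mul Cz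
      simp at this; exact this
    have hbd : ∀ᵐ y ∂(volume.restrict (Ioi (0:ℝ))),
        ‖gg p y * (Q p (y+z) - cp p * Real.exp (-(y+z)))‖ ≤ Cz * Real.exp (-y) := by
      rw [ae_restrict_iff' measurableSet_Ioi]
      apply ae_of_all
      intro y hy
      have hy0 : (0:ℝ) < y := hy
      calc ‖gg p y * (Q p (y+z) - cp p * Real.exp (-(y+z)))‖
          ≤ Cz * Real.exp (-(p * |y|) + p * (-y)) := hptwise y
        _ ≤ Cz * Real.exp (-y) := by
            apply mul_le_mul_of_nonneg_left ?_ hCzp.le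
            rw [Real.exp_le_exp, abs_of_pos hy0]
            nlinarith
    calc ‖∫ y in Ioi 0, gg p y * (Q p (y+z) - cp p * Real.exp (-(y+z)))‖
        ≤ ∫ y in Ioi 0, Cz * Real.exp (-y) :=
          MeasureTheory.norm_integral_le_of_norm_le hint hbd
      _ = Cz * ∫ y in Ioi 0, Real.exp (-y) := MeasureTheory.integral_const_mul _ _
      _ = Cz := by rw [integral_exp_neg_Ioi, neg_zero, Real.exp_zero, mul_one]
  have hEbound : |∫ y in Ioi (-z/2), gg p y * (Q p (y+z) - cp p * Real.exp (-(y+z)))|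
      ≤ C2 * (z * Real.exp (-p * z)) := by
    rw [hEsplit]
    have h1 := add_le_add hB1 hB2
    rw [Real.norm_eq_abs, Real.norm_eq_abs] at h1
    calc |(∫ y in Ioc (-z/2) 0, gg p y * (Q p (y+z) - cp p * Real.exp (-(y+z))))
          + ∫ y in Ioi 0, gg p y * (Q p (y+z) - cp p * Real.exp (-(y+z)))|
        ≤ Cz * (z/2) + Cz := (abs_add_le _ _).trans h1
      _ ≤ Cz * ((3/2) * z) := by nlinarith
      _ = C2 * (z * Real.exp (-p * z)) := by
          rw [hCz, hC2, show -p * z = -(p*z) from by ring]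
          ring
  -- assemble
  rw [hsplit, hmain]
  have hmd := main_diff hp z hz
  rw [← hC1] at hmd
  have habs : |(cp p * Real.exp (-z)
          * (0 - (Q p (-z/2) ^ p * Real.exp (-(-z/2)) + HH p (-z/2)))
        + ∫ y in Ioi (-z/2), gg p y * (Q p (y+z) - cp p * Real.exp (-(y+z))))
      - 2 * (cp p) ^ 2 * Real.exp (-z)|
      ≤ C1 * Real.exp (-(p + 1) * z / 2) + C2 * (z * Real.exp (-p * z)) := by
    have hrearr : (cp p * Real.exp (-z)
          * (0 - (Q p (-z/2) ^ p * Real.exp (-(-z/2)) + HH p (-z/2)))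
        + ∫ y in Ioi (-z/2), gg p y * (Q p (y+z) - cp p * Real.exp (-(y+z))))
      - 2 * (cp p) ^ 2 * Real.exp (-z)
      = (cp p * Real.exp (-z)
          * (0 - (Q p (-z/2) ^ p * Real.exp (-(-z/2)) + HH p (-z/2)))
        - 2 * (cp p) ^ 2 * Real.exp (-z))
        + ∫ y in Ioi (-z/2), gg p y * (Q p (y+z) - cp p * Real.exp (-(y+z))) := by
      ring
    rw [hrearr]
    exact (abs_add_le _ _).trans (add_le_add hmd hEbound)
  refine habs.trans ?_
  have he1 : 0 < Real.exp (-(p + 1) * z / 2) := Real.exp_pos _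
  have he2 : 0 < z * Real.exp (-p * z) := by positivity
  have he3 : 0 < Real.exp (-2 * z) := Real.exp_pos _
  clear_value C1 C2
  nlinarith [mul_pos (by positivity : (0:ℝ) < C2 + 1) he1,
    mul_pos (by positivity : (0:ℝ) < C1 + 1) he2,
    mul_pos (by positivity : (0:ℝ) < C1 + C2 + 1) he3]
end
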